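/- For the polynomial P_4(z) = z + (7/6)z² + (2/3)z³ + (1/6)z⁴ and every real t, one has |P_4(e^{it})| ≥ 1/3, with equality when t = π. -/

import Mathlib

/-- The polynomial `P₄(z) = z + (7/6)z² + (2/3)z³ + (1/6)z⁴`. -/
noncomputable def P4 (z : ℂ) : ℂ := z + (7 / 6) * z ^ 2 + (2 / 3) * z ^ 3 + (1 / 6) * z ^ 4

lemma key (t : ℝ) :
    ‖P4 (Complex.exp (Complex.I * t))‖ ^ 2 =
      (1/36) * (5 + 4 * Real.cos t) * (12 * Real.cos t ^ 2 + 16 * Real.cos t + 8) := by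
  have hz : Complex.exp (Complex.I * t) = (Real.cos t : ℂ) + (Real.sin t : ℂ) * Complex.I := by
    rw [mul_comm, Complex.exp_mul_I, ← Complex.ofReal_cos, ← Complex.ofReal_sin]
  have hs : Real.sin t ^ 2 = 1 - Real.cos t ^ 2 := by
    nlinarith [Real.sin_sq_add_cos_sq t]
  rw [Complex.sq_norm, hz, P4]
  simp [Complex.normSq_apply, Complex.add_re, Complex.add_im, Complex.mul_re, Complex.mul_im,
    pow_succ, Complex.ofReal_re, Complex.ofReal_im, Complex.I_re, Complex.I_im,
    Complex.div_re, Complex.div_im]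
  ring_nf
  simp only [Complex.cos_ofReal_re, Complex.sin_ofReal_re]
  have h8 : Real.sin t ^ 8 = (1 - Real.cos t ^ 2) ^ 4 := by
    rw [show Real.sin t ^ 8 = (Real.sin t ^ 2) ^ 4 by ring, hs]
  have h6 : Real.sin t ^ 6 = (1 - Real.cos t ^ 2) ^ 3 := by
    rw [show Real.sin t ^ 6 = (Real.sin t ^ 2) ^ 3 by ring, hs]
  have h4 : Real.sin t ^ 4 = (1 - Real.cos t ^ 2) ^ 2 := by
    rw [show Real.sin t ^ 4 = (Real.sin t ^ 2) ^ 2 by ring, hs]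
  rw [h8, h6, h4, hs]
  ring

theorem stmt12 :
    (∀ t : ℝ, 1 / 3 ≤ ‖P4 (Complex.exp (Complex.I * t))‖) ∧
      ‖P4 (Complex.exp (Complex.I * Real.pi))‖ = 1 / 3 := by
  constructor
  · intro t
    have h := key t
    have hc1 : -1 ≤ Real.cos t := Real.neg_one_le_cos t
    have hc2 : Real.cos t ≤ 1 := Real.cos_le_one t
    have hsq : (1/3 : ℝ) ^ 2 ≤ ‖P4 (Complex.exp (Complex.I * t))‖ ^ 2 := by
      rw [h]; nlinarith [sq_nonneg (Real.cos t + 1), sq_nonneg (Real.cos t)]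
    have := norm_nonneg (P4 (Complex.exp (Complex.I * t)))
    nlinarith
  · have h := key Real.pi
    rw [Real.cos_pi] at h
    have hsq : ‖P4 (Complex.exp (Complex.I * Real.pi))‖ ^ 2 = (1/3 : ℝ) ^ 2 := by
      rw [h]; norm_num
    have := norm_nonneg (P4 (Complex.exp (Complex.I * Real.pi)))
    nlinarith
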